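/- Let n ≥ 1, m ≥ 2, and let c_1,...,c_m, u_1, v_1, ..., u_n, v_n be real numbers, and let (a_{ij}) be a real m×n array. Then the function f(t) = sum_{i=1}^m c_i prod_{j=1}^n (u_j + v_j t)^{a_{ij}} has at most n + n^2 + ... + n^{m-1} isolated roots in the open interval I = {t > 0 : u_j + v_j t > 0 for all j}. -/

import Mathlib

open Set Polynomial Filter

namespace Stmt3


/-- The open domain. -/
def Dom (n : ℕ) (u v : Fin n → ℝ) : Set ℝ := {t | 0 < t ∧ ∀ j, 0 < u j + v j * t}

variable {n : ℕ} {u v : Fin n → ℝ}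

lemma isOpen_Dom : IsOpen (Dom n u v) := by
  have h0 : IsOpen {t : ℝ | 0 < t} := isOpen_lt continuous_const continuous_id
  have h1 : ∀ j : Fin n, IsOpen {t : ℝ | 0 < u j + v j * t} := fun j =>
    isOpen_lt continuous_const (by continuity)
  have : Dom n u v = {t : ℝ | 0 < t} ∩ ⋂ j, {t : ℝ | 0 < u j + v j * t} := by
    ext t; simp [Dom, Set.mem_iInter]
  rw [this]
  exact h0.inter (isOpen_iInter_of_finite h1)

lemma Icc_subset_Dom {a b : ℝ} (ha : a ∈ Dom n u v) (hb : b ∈ Dom n u v) :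
    Icc a b ⊆ Dom n u v := by
  intro t ht
  refine ⟨lt_of_lt_of_le ha.1 ht.1, fun j => ?_⟩
  rcases le_or_gt 0 (v j) with h | h
  · nlinarith [ha.2 j, ht.1]
  · nlinarith [hb.2 j, ht.2]

lemma convex_Dom : Convex ℝ (Dom n u v) := by
  intro a ha b hb s t hs ht hst
  simp only [smul_eq_mul]
  have h1 : t * (b - a) + a = s * a + t * b := by linear_combination (-a) * hst
  have h2 : s * (a - b) + b = s * a + t * b := by linear_combination (-b) * hst
  rcases le_total a b with hab | hab
  · refine Icc_subset_Dom ha hb ⟨?_, ?_⟩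
    · nlinarith [mul_nonneg ht (sub_nonneg.mpr hab)]
    · nlinarith [mul_nonneg hs (sub_nonneg.mpr hab)]
  · refine Icc_subset_Dom hb ha ⟨?_, ?_⟩
    · nlinarith [mul_nonneg hs (sub_nonneg.mpr hab)]
    · nlinarith [mul_nonneg ht (sub_nonneg.mpr hab)]

lemma preconnected_Dom : IsPreconnected (Dom n u v) := convex_Dom.isPreconnected

/-- The pure power function. -/
noncomputable def E (u v : Fin n → ℝ) (b : Fin n → ℝ) (t : ℝ) : ℝ :=
  ∏ j, (u j + v j * t) ^ b j

lemma E_pos {b : Fin n → ℝ} {t : ℝ} (ht : t ∈ Dom n u v) : 0 < E u v b t :=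
  Finset.prod_pos fun j _ => Real.rpow_pos_of_pos (ht.2 j) _

lemma E_eq_exp {b : Fin n → ℝ} {t : ℝ} (ht : t ∈ Dom n u v) :
    E u v b t = Real.exp (∑ j, Real.log (u j + v j * t) * b j) := by
  rw [Real.exp_sum]
  exact Finset.prod_congr rfl fun j _ => Real.rpow_def_of_pos (ht.2 j) _

lemma E_add {b c : Fin n → ℝ} {t : ℝ} (ht : t ∈ Dom n u v) :
    E u v (fun j => b j + c j) t = E u v b t * E u v c t := by
  rw [E, E, E, ← Finset.prod_mul_distrib]
  exact Finset.prod_congr rfl fun j _ => Real.rpow_add (ht.2 j) _ _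



variable {n : ℕ} {u v : Fin n → ℝ}

-- affine has deriv
lemma hasDerivAt_affine (a b t : ℝ) : HasDerivAt (fun t : ℝ => a + b * t) b t := by
  simpa using ((hasDerivAt_id t).const_mul b).const_add a

-- log sum derivative
lemma hasDerivAt_logsum (b : Fin n → ℝ) {t : ℝ} (ht : ∀ j, 0 < u j + v j * t) :
    HasDerivAt (fun t => ∑ j, Real.log (u j + v j * t) * b j)
      (∑ j, v j / (u j + v j * t) * b j) t := by
  apply HasDerivAt.fun_sum
  intro j _
  have h1 : HasDerivAt (fun t : ℝ => Real.log (u j + v j * t)) ((u j + v j * t)⁻¹ * v j) t :=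
    by have h := (Real.hasDerivAt_log (ht j).ne').comp t (hasDerivAt_affine (u j) (v j) t); exact h
  simpa [div_eq_inv_mul] using h1.mul_const (b j)

-- analyticity of real log at positive points
lemma analyticAt_rlog {x : ℝ} (hx : 0 < x) : AnalyticAt ℝ Real.log x := by
  have h1 : AnalyticAt ℂ Complex.log (x : ℂ) :=
    analyticAt_clog (by exact Or.inl (by simpa using hx))
  have h2 : AnalyticAt ℝ Complex.log (x : ℂ) := h1.restrictScalars
  have h3 : AnalyticAt ℝ (fun t : ℝ => (t : ℂ)) x := Complex.ofRealCLM.analyticAt x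
  have h4 : AnalyticAt ℝ (fun t : ℝ => Complex.log (t : ℂ)) x := h2.comp h3
  have h5 : AnalyticAt ℝ (fun t : ℝ => (Complex.log (t : ℂ)).re) x :=
    (Complex.reCLM.analyticAt _).comp h4
  apply h5.congr
  filter_upwards [eventually_gt_nhds hx] with t _
  rw [Complex.log_ofReal_re]


lemma ncard_remove {R : Set ℝ} (hR : R.Finite) {x : ℝ} (hx : x ∈ R) {R' : Set ℝ}
    (h : R' ⊆ R) (hx' : x ∉ R') : R'.ncard + 1 ≤ R.ncard := by
  have h1 : insert x R' ⊆ R := Set.insert_subset hx h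
  have h2 := Set.ncard_le_ncard h1 hR
  rwa [Set.ncard_insert_of_notMem hx' (hR.subset h)] at h2

lemma gap_aux : ∀ (N : ℕ) (S : Finset ℝ) (Z R W : Set ℝ), S.card ≤ N →
    R.Finite → W.Finite → ↑S ⊆ Z →
    (∀ t₁ ∈ Z, ∀ t₂ ∈ Z, t₁ < t₂ →
      (∃ x ∈ R, t₁ < x ∧ x < t₂) ∨ (∃ x ∈ W, t₁ < x ∧ x < t₂) ∨ t₁ ∈ R ∨ t₂ ∈ R) →
    (Z ∩ R ⊆ W) →
    S.card ≤ R.ncard + W.ncard + 1 := by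
  intro N
  induction N with
  | zero => intro S Z R W h _ _ _ _ _; omega
  | succ N ih =>
    intro S Z R W hcard hR hW hSZ hyp hZR
    by_cases hS2 : S.card ≤ 1
    · omega
    push_neg at hS2
    have hS0 : S.Nonempty := Finset.card_pos.mp (by omega)
    set a := S.min' hS0 with ha_def
    have haS : a ∈ S := S.min'_mem hS0
    set S' := S.erase a with hS'_def
    have hS'card : S'.card = S.card - 1 := Finset.card_erase_of_mem haS
    have hS'0 : S'.Nonempty := Finset.card_pos.mp (by omega)
    set b := S'.min' hS'0 with hb_def
    have hbS' : b ∈ S' := S'.min'_mem hS'0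
    have hbS : b ∈ S := Finset.mem_of_mem_erase hbS'
    have hab : a < b := lt_of_le_of_ne (S.min'_le _ hbS) (Ne.symm (Finset.ne_of_mem_erase hbS'))
    have hS'ge : ∀ x ∈ S', b ≤ x := fun x hx => S'.min'_le _ hx
    have haZ : a ∈ Z := hSZ haS
    have hbZ : b ∈ Z := hSZ hbS
    have hS'sub : (↑S' : Set ℝ) ⊆ Z ∩ Ici b := fun x hx =>
      ⟨hSZ (Finset.mem_of_mem_erase hx), hS'ge x hx⟩
    rcases hyp a haZ b hbZ hab with ⟨x, hxR, hax, hxb⟩ | ⟨x, hxW, hax, hxb⟩ | haR | hbR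
    · -- interior R point: shrink R
      have hkey := ih S' (Z ∩ Ici b) (R ∩ Ioi x) W (by omega)
        (hR.subset Set.inter_subset_left) hW hS'sub
        (by
          rintro t₁ ⟨ht₁Z, ht₁b⟩ t₂ ⟨ht₂Z, ht₂b⟩ hlt
          rcases hyp t₁ ht₁Z t₂ ht₂Z hlt with ⟨y, hyR, h1, h2⟩ | ⟨y, hyW, h1, h2⟩ | h | h
          · exact Or.inl ⟨y, ⟨hyR, (hxb.trans_le ht₁b).trans h1⟩, h1, h2⟩
          · exact Or.inr (Or.inl ⟨y, hyW, h1, h2⟩)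
          · exact Or.inr (Or.inr (Or.inl ⟨h, hxb.trans_le ht₁b⟩))
          · exact Or.inr (Or.inr (Or.inr ⟨h, hxb.trans_le (ht₁b.trans hlt.le)⟩)))
        (fun z hz => hZR ⟨hz.1.1, hz.2.1⟩)
      have hRcard := ncard_remove hR hxR (Set.inter_subset_left (t := Ioi x))
        (fun h => lt_irrefl x h.2)
      omega
    · -- interior W point: shrink W
      have hkey := ih S' (Z ∩ Ici b) R (W ∩ Ioi x) (by omega)
        hR (hW.subset Set.inter_subset_left) hS'sub
        (by
          rintro t₁ ⟨ht₁Z, ht₁b⟩ t₂ ⟨ht₂Z, ht₂b⟩ hlt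
          rcases hyp t₁ ht₁Z t₂ ht₂Z hlt with ⟨y, hyR, h1, h2⟩ | ⟨y, hyW, h1, h2⟩ | h | h
          · exact Or.inl ⟨y, hyR, h1, h2⟩
          · exact Or.inr (Or.inl ⟨y, ⟨hyW, (hxb.trans_le ht₁b).trans h1⟩, h1, h2⟩)
          · exact Or.inr (Or.inr (Or.inl h))
          · exact Or.inr (Or.inr (Or.inr h)))
        (fun z hz => ⟨hZR ⟨hz.1.1, hz.2⟩, hxb.trans_le hz.1.2⟩)
      have hWcard := ncard_remove hW hxW (Set.inter_subset_left (t := Ioi x))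
        (fun h => lt_irrefl x h.2)
      omega
    · -- a ∈ R : shrink R by a
      have hkey := ih S' (Z ∩ Ici b) (R ∩ Ioi a) W (by omega)
        (hR.subset Set.inter_subset_left) hW hS'sub
        (by
          rintro t₁ ⟨ht₁Z, ht₁b⟩ t₂ ⟨ht₂Z, ht₂b⟩ hlt
          rcases hyp t₁ ht₁Z t₂ ht₂Z hlt with ⟨y, hyR, h1, h2⟩ | ⟨y, hyW, h1, h2⟩ | h | h
          · exact Or.inl ⟨y, ⟨hyR, (hab.trans_le ht₁b).trans h1⟩, h1, h2⟩
          · exact Or.inr (Or.inl ⟨y, hyW, h1, h2⟩)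
          · exact Or.inr (Or.inr (Or.inl ⟨h, hab.trans_le ht₁b⟩))
          · exact Or.inr (Or.inr (Or.inr ⟨h, hab.trans_le (ht₁b.trans hlt.le)⟩)))
        (fun z hz => hZR ⟨hz.1.1, hz.2.1⟩)
      have hRcard := ncard_remove hR haR (Set.inter_subset_left (t := Ioi a))
        (fun h => lt_irrefl a h.2)
      omega
    · -- b ∈ R, hence b ∈ W; remove both a and b
      have hbW : b ∈ W := hZR ⟨hbZ, hbR⟩
      set S'' := S'.erase b with hS''_def
      have hS''card : S''.card = S'.card - 1 := Finset.card_erase_of_mem hbS'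
      have hRpos : 1 ≤ R.ncard := ncard_remove hR hbR (Set.empty_subset R) (Set.notMem_empty b) |>.trans_eq' (by simp)
      have hWpos : 1 ≤ W.ncard := ncard_remove hW hbW (Set.empty_subset W) (Set.notMem_empty b) |>.trans_eq' (by simp)
      by_cases hS''0 : S''.card = 0
      · omega
      have hS''ge : ∀ x ∈ S'', b < x := fun x hx =>
        lt_of_le_of_ne (hS'ge x (Finset.mem_of_mem_erase hx))
          (Ne.symm (Finset.ne_of_mem_erase hx))
      have hkey := ih S'' (Z ∩ Ioi b) (R ∩ Ioi b) (W ∩ Ioi b) (by omega)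
        (hR.subset Set.inter_subset_left) (hW.subset Set.inter_subset_left)
        (fun x hx => ⟨hSZ (Finset.mem_of_mem_erase (Finset.mem_of_mem_erase hx)), hS''ge x hx⟩)
        (by
          rintro t₁ ⟨ht₁Z, ht₁b⟩ t₂ ⟨ht₂Z, ht₂b⟩ hlt
          rcases hyp t₁ ht₁Z t₂ ht₂Z hlt with ⟨y, hyR, h1, h2⟩ | ⟨y, hyW, h1, h2⟩ | h | h
          · exact Or.inl ⟨y, ⟨hyR, ht₁b.trans h1⟩, h1, h2⟩
          · exact Or.inr (Or.inl ⟨y, ⟨hyW, ht₁b.trans h1⟩, h1, h2⟩)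
          · exact Or.inr (Or.inr (Or.inl ⟨h, ht₁b⟩))
          · exact Or.inr (Or.inr (Or.inr ⟨h, ht₁b.trans hlt⟩)))
        (fun z hz => ⟨hZR ⟨hz.1.1, hz.2.1⟩, hz.1.2⟩)
      have hRcard := ncard_remove hR hbR (Set.inter_subset_left (t := Ioi b))
        (fun h => lt_irrefl b h.2)
      have hWcard := ncard_remove hW hbW (Set.inter_subset_left (t := Ioi b))
        (fun h => lt_irrefl b h.2)
      omega

lemma finite_of_card_le {Z : Set ℝ} {K : ℕ}
    (h : ∀ S : Finset ℝ, ↑S ⊆ Z → S.card ≤ K) : Z.Finite ∧ Z.ncard ≤ K := by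
  by_cases hZ : Z.Finite
  · refine ⟨hZ, ?_⟩
    have h2 := h hZ.toFinset (by simp)
    rwa [Set.ncard_eq_toFinset_card _ hZ]
  · exfalso
    obtain ⟨T, hTs, hTfin, hTcard⟩ :=
      Set.Infinite.exists_subset_ncard_eq hZ (K + 1)
    have h2 := h hTfin.toFinset (by simpa using hTs)
    rw [← Set.ncard_eq_toFinset_card _ hTfin] at h2
    omega


def Bnd (n : ℕ) : ℕ → ℕ → ℕ
  | 0, _ => 0
  | 1, d => d
  | (m+2), d => 1 + d + Bnd n (m+1) (2*d + (n-1))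

lemma Bnd_d_le (n : ℕ) : ∀ m d, 1 ≤ m → d ≤ Bnd n m d := by
  intro m
  match m with
  | 0 => omega
  | 1 => intro d _; simp [Bnd]
  | (m+2) => intro d _; unfold Bnd; omega

lemma Bnd_lin (n : ℕ) : ∀ m x y, Bnd n (m+1) (x+y) ≤ (2^(m+1) - 1) * x + Bnd n (m+1) y := by
  intro m
  induction m with
  | zero => intro x y; simp [Bnd]
  | succ m ih =>
    intro x y
    show Bnd n (m+2) (x+y) ≤ _
    unfold Bnd
    have h1 : 2*(x+y) + (n-1) = 2*x + (2*y + (n-1)) := by omega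
    rw [h1]
    have h2 := ih (2*x) (2*y + (n-1))
    have h3 : 1 ≤ 2^(m+1) := Nat.one_le_two_pow
    have e1 : (2^(m+1)-1)*(2*x) = 2^(m+1)*(2*x) - 2*x := by
      rw [Nat.sub_mul, one_mul]
    have e2 : (2^(m+1+1)-1)*x = 2^(m+1+1)*x - x := by
      rw [Nat.sub_mul, one_mul]
    have e3 : 2^(m+1+1)*x = 2^(m+1)*(2*x) := by ring
    have e4 : 2*x ≤ 2^(m+1)*(2*x) := Nat.le_mul_of_pos_left _ (by positivity)
    omega

lemma Bnd_key (n : ℕ) (hn : 1 ≤ n) : ∀ m, 1 + (2^m - 1)*(n-1) ≤ n^m := by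
  obtain ⟨j, rfl⟩ : ∃ j, n = j + 1 := ⟨n-1, by omega⟩
  intro m
  induction m with
  | zero => simp
  | succ m ih =>
    simp only [Nat.add_sub_cancel] at ih ⊢
    have h3 : 1 ≤ 2^m := Nat.one_le_two_pow
    have hsplit : 2^(m+1)-1 = 2^m + (2^m - 1) := by
      have : 2^(m+1) = 2*2^m := by ring
      omega
    rw [hsplit, Nat.add_mul]
    have h6 : 1 ≤ (j+1)^m := Nat.one_le_pow _ _ (by omega)
    have h2 : (2:ℕ)^m * j ≤ (j+1)^m * j ∨ j = 0 := by
      rcases Nat.eq_zero_or_pos j with h | h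
      · right; exact h
      · left
        exact Nat.mul_le_mul_right _ (Nat.pow_le_pow_left (by omega) m)
    have h8 : (j+1)^m + (j+1)^m * j = (j+1)^(m+1) := by rw [pow_succ]; ring
    rcases h2 with h2 | h2
    · omega
    · subst h2; simpa using ih

lemma Bnd_le_sum (n : ℕ) (hn : 1 ≤ n) : ∀ m, Bnd n (m+2) 0 ≤ ∑ k ∈ Finset.Icc 1 (m+1), n^k := by
  intro m
  induction m with
  | zero =>
    show 1 + 0 + Bnd n 1 (2*0 + (n-1)) ≤ _
    simp [Bnd]
    omega
  | succ m ih =>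
    show 1 + 0 + Bnd n (m+2) (2*0 + (n-1)) ≤ _
    have h1 : 2*0 + (n-1) = (n-1) + 0 := by omega
    rw [h1]
    have h2 : Bnd n (m+2) (n-1+0) ≤ (2^(m+2)-1)*(n-1) + Bnd n (m+2) 0 :=
      Bnd_lin n (m+1) (n-1) 0
    have h3 := Bnd_key n hn (m+2)
    have h4 : ∑ k ∈ Finset.Icc 1 (m+2), n^k = (∑ k ∈ Finset.Icc 1 (m+1), n^k) + n^(m+2) := by
      rw [Finset.sum_Icc_succ_top (by omega)]
    have h5 : ∑ k ∈ Finset.Icc 1 (m+1+1), n^k = ∑ k ∈ Finset.Icc 1 (m+2), n^k := rfl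
    omega


/-- logarithmic derivative factor -/
noncomputable def A (u v : Fin n → ℝ) (b : Fin n → ℝ) (t : ℝ) : ℝ :=
  ∑ j, v j / (u j + v j * t) * b j

lemma hasDerivAt_E (b : Fin n → ℝ) {t : ℝ} (ht : t ∈ Dom n u v) :
    HasDerivAt (E u v b) (E u v b t * A u v b t) t := by
  have h1 : HasDerivAt (fun t => Real.exp (∑ j, Real.log (u j + v j * t) * b j))
      (Real.exp (∑ j, Real.log (u j + v j * t) * b j) * A u v b t) t :=
    (Real.hasDerivAt_exp _).comp t (hasDerivAt_logsum b ht.2)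
  rw [← E_eq_exp ht] at h1
  apply h1.congr_of_eventuallyEq
  filter_upwards [isOpen_Dom.mem_nhds ht] with s hs
  exact E_eq_exp hs

lemma analyticAt_E (b : Fin n → ℝ) {t : ℝ} (ht : t ∈ Dom n u v) :
    AnalyticAt ℝ (E u v b) t := by
  have h1 : AnalyticAt ℝ (fun t => Real.exp (∑ j, Real.log (u j + v j * t) * b j)) t := by
    apply analyticAt_rexp.comp
    apply Finset.analyticAt_fun_sum
    intro j _
    have haff : AnalyticAt ℝ (fun t : ℝ => u j + v j * t) t :=
      analyticAt_const.add (analyticAt_const.mul analyticAt_id)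
    have hlog : AnalyticAt ℝ Real.log (u j + v j * t) := analyticAt_rlog (ht.2 j)
    have hc : AnalyticAt ℝ (Real.log ∘ fun t : ℝ => u j + v j * t) t := AnalyticAt.comp (f := fun t : ℝ => u j + v j * t) (x := t) hlog haff
    exact (hc.congr (by filter_upwards with s; simp [Function.comp])).mul analyticAt_const
  apply h1.congr
  filter_upwards [isOpen_Dom.mem_nhds ht] with s hs
  exact (E_eq_exp hs).symm

lemma analyticAt_polyeval (p : ℝ[X]) (t : ℝ) : AnalyticAt ℝ (fun x => p.eval x) t := by
  induction p using Polynomial.induction_on with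
  | C a => simpa using (analyticAt_const : AnalyticAt ℝ (fun _ : ℝ => a) t)
  | add p q hp hq => have h : AnalyticAt ℝ (fun x => eval x p + eval x q) t := hp.add hq; simpa [eval_add] using h
  | monomial k a _ =>
    have : AnalyticAt ℝ (fun x : ℝ => a * x ^ (k + 1)) t :=
      analyticAt_const.mul (analyticAt_id.pow _)
    simpa using this


lemma main_induction (n : ℕ) (hn : 1 ≤ n) (u v : Fin n → ℝ) :
    ∀ (m : ℕ) (p : Fin m → ℝ[X]) (b : Fin m → Fin n → ℝ) (d : ℕ),
    (∀ i, (p i).natDegree ≤ d) →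
    (∀ t ∈ Dom n u v, ∑ i, (p i).eval t * E u v (b i) t = 0) ∨
    ({t ∈ Dom n u v | ∑ i, (p i).eval t * E u v (b i) t = 0}.Finite ∧
     {t ∈ Dom n u v | ∑ i, (p i).eval t * E u v (b i) t = 0}.ncard ≤ Bnd n m d) := by
  intro m
  induction m with
  | zero =>
    intro p b d _
    left
    intro t _
    simp
  | succ m ih =>
    intro p b d hdeg
    by_cases hall : ∀ i, p i = 0
    · left; intro t _; simp [hall]
    push_neg at hall
    obtain ⟨i₀, hi₀⟩ := hall
    match m, ih with
    | 0, _ =>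
      right
      have hset : {t | t ∈ Dom n u v ∧ ∑ i : Fin 1, (p i).eval t * E u v (b i) t = 0}
          ⊆ ↑(p 0).roots.toFinset := by
        intro t ht
        obtain ⟨htD, hts⟩ := ht
        simp only [Fin.sum_univ_one] at hts
        have hE := (E_pos (b := b 0) htD).ne'
        have hev : (p 0).eval t = 0 := by
          rcases mul_eq_zero.mp hts with h | h
          · exact h
          · exact absurd h hE
        simp only [Multiset.mem_toFinset, Finset.mem_coe, Polynomial.mem_roots']
        refine ⟨?_, hev⟩
        have h0 : i₀ = 0 := Fin.ext (by omega)
        rwa [← h0]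
      have hfin : {t | t ∈ Dom n u v ∧ ∑ i : Fin 1, (p i).eval t * E u v (b i) t = 0}.Finite :=
        Set.Finite.subset (p 0).roots.toFinset.finite_toSet hset
      refine ⟨hfin, ?_⟩
      have h1 := Set.ncard_le_ncard hset (p 0).roots.toFinset.finite_toSet
      rw [Set.ncard_coe_finset] at h1
      have h2 : (p 0).roots.toFinset.card ≤ (p 0).natDegree :=
        (Multiset.toFinset_card_le _).trans ((p 0).card_roots')
      exact (h1.trans h2).trans (hdeg 0)
    | (m+1), ih =>
    set σ : Equiv.Perm (Fin (m+2)) := Equiv.swap i₀ (Fin.last (m+1)) with hσ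
    set P : Fin (m+2) → ℝ[X] := p ∘ σ with hP
    set Bv : Fin (m+2) → Fin n → ℝ := b ∘ σ with hBv
    have hPdeg : ∀ i, (P i).natDegree ≤ d := fun i => hdeg (σ i)
    set pm : ℝ[X] := P (Fin.last (m+1)) with hpm
    have hpm0 : pm ≠ 0 := by
      simp only [hpm, hP, Function.comp_apply, hσ, Equiv.swap_apply_right]
      exact hi₀
    have hsum : ∀ t, ∑ i, (p i).eval t * E u v (b i) t
        = ∑ i, (P i).eval t * E u v (Bv i) t :=
      fun t => (Equiv.sum_comp σ (fun i => (p i).eval t * E u v (b i) t)).symm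
    set c : Fin (m+2) → Fin n → ℝ := fun i j => Bv i j - Bv (Fin.last (m+1)) j with hc
    set h₁ : ℝ → ℝ := fun t => ∑ i, (P i).eval t * E u v (c i) t with hh₁
    have hfact : ∀ t ∈ Dom n u v, ∑ i, (p i).eval t * E u v (b i) t
        = E u v (Bv (Fin.last (m+1))) t * h₁ t := by
      intro t ht
      rw [hsum, hh₁, Finset.mul_sum]
      apply Finset.sum_congr rfl
      intro i _
      have h1 : (fun j => c i j + Bv (Fin.last (m+1)) j) = Bv i := by
        funext j; simp [hc]
      have h2 := E_add (u := u) (v := v) (b := c i) (c := Bv (Fin.last (m+1))) ht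
      rw [h1] at h2
      rw [h2]; ring
    have hZeq : {t | t ∈ Dom n u v ∧ ∑ i, (p i).eval t * E u v (b i) t = 0}
        = {t | t ∈ Dom n u v ∧ h₁ t = 0} := by
      ext t
      simp only [Set.mem_setOf_eq, and_congr_right_iff]
      intro ht
      rw [hfact t ht]
      constructor
      · intro h
        rcases mul_eq_zero.mp h with h | h
        · exact absurd h (E_pos ht).ne'
        · exact h
      · intro h; rw [h, mul_zero]
    set Dfun : ℝ → ℝ := fun t => ∑ i, ((P i).derivative.eval t
        + (P i).eval t * A u v (c i) t) * E u v (c i) t with hDfun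
    have hderiv : ∀ t ∈ Dom n u v, HasDerivAt h₁ (Dfun t) t := by
      intro t ht
      rw [hh₁, hDfun]
      apply HasDerivAt.fun_sum
      intro i _
      have h1 := ((P i).hasDerivAt t).mul (hasDerivAt_E (c i) ht)
      have h2 : (P i).derivative.eval t * E u v (c i) t
          + (P i).eval t * (E u v (c i) t * A u v (c i) t)
          = ((P i).derivative.eval t + (P i).eval t * A u v (c i) t) * E u v (c i) t := by ring
      rwa [h2] at h1
    set G : ℝ[X] := ∏ j, (Polynomial.C (u j) + Polynomial.C (v j) * Polynomial.X) with hG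
    have hGeval : ∀ t, G.eval t = ∏ j, (u j + v j * t) := by
      intro t; simp [hG, eval_prod]
    have hGpos : ∀ t ∈ Dom n u v, 0 < G.eval t := by
      intro t ht; rw [hGeval]; exact Finset.prod_pos fun j _ => ht.2 j
    have hlin_deg : ∀ j : Fin n,
        (Polynomial.C (u j) + Polynomial.C (v j) * Polynomial.X).natDegree ≤ 1 := by
      intro j
      refine (Polynomial.natDegree_add_le _ _).trans (max_le ?_ ?_)
      · simp
      · refine (Polynomial.natDegree_mul_le).trans ?_
        simp [Polynomial.natDegree_X_le]
    have hGdeg : G.natDegree ≤ n := by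
      rw [hG]
      refine (Polynomial.natDegree_prod_le _ _).trans ?_
      calc ∑ j, (Polynomial.C (u j) + Polynomial.C (v j) * Polynomial.X).natDegree
          ≤ ∑ _j : Fin n, (1:ℕ) := by exact Finset.sum_le_sum (fun j _ => hlin_deg j)
        _ = n := by simp
    set Spoly : Fin (m+2) → ℝ[X] := fun i => ∑ j, Polynomial.C (c i j * v j) *
        ∏ k ∈ Finset.univ.erase j, (Polynomial.C (u k) + Polynomial.C (v k) * Polynomial.X)
        with hSpoly
    have hSeval : ∀ i, ∀ t ∈ Dom n u v, (Spoly i).eval t = A u v (c i) t * G.eval t := by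
      intro i t ht
      rw [hSpoly, hGeval, A, Finset.sum_mul]
      simp only [Polynomial.eval_finset_sum, Polynomial.eval_mul, Polynomial.eval_C,
        Polynomial.eval_prod, Polynomial.eval_add, Polynomial.eval_X]
      apply Finset.sum_congr rfl
      intro j _
      rw [← Finset.mul_prod_erase Finset.univ _ (Finset.mem_univ j)]
      have hne := (ht.2 j).ne'
      field_simp
      ring
      exact congrArg _ (Finset.prod_congr rfl fun x _ => by ring)
    have hSdeg : ∀ i, (Spoly i).natDegree ≤ n - 1 := by
      intro i
      rw [hSpoly]
      refine Polynomial.natDegree_sum_le_of_forall_le _ _ ?_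
      intro j _
      refine (Polynomial.natDegree_mul_le).trans ?_
      simp only [Polynomial.natDegree_C, zero_add]
      refine (Polynomial.natDegree_prod_le _ _).trans ?_
      have hcard : (Finset.univ.erase j).card = n - 1 := by
        rw [Finset.card_erase_of_mem (Finset.mem_univ j)]; simp
      calc ∑ k ∈ Finset.univ.erase j,
            (Polynomial.C (u k) + Polynomial.C (v k) * Polynomial.X).natDegree
          ≤ ∑ _k ∈ Finset.univ.erase j, (1:ℕ) := by exact Finset.sum_le_sum (fun k _ => hlin_deg k)
        _ = n - 1 := by rw [Finset.sum_const, smul_eq_mul, mul_one, hcard]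
    set qfull : Fin (m+2) → ℝ[X] := fun i =>
      ((P i).derivative * pm - P i * pm.derivative) * G + P i * pm * Spoly i with hqfull
    set q : Fin (m+1) → ℝ[X] := fun i => qfull i.castSucc with hq
    set H : ℝ → ℝ := fun t => ∑ i : Fin (m+1), (q i).eval t * E u v (c i.castSucc) t with hH
    have hclast : c (Fin.last (m+1)) = fun _ => 0 := by
      funext j; simp [hc]
    have key : ∀ t ∈ Dom n u v,
        H t = G.eval t * (Dfun t * pm.eval t - h₁ t * pm.derivative.eval t) := by
      intro t ht
      have expand : G.eval t * (Dfun t * pm.eval t - h₁ t * pm.derivative.eval t)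
          = ∑ i : Fin (m+2), (qfull i).eval t * E u v (c i) t := by
        rw [hDfun, hh₁, Finset.sum_mul, Finset.sum_mul, ← Finset.sum_sub_distrib,
          Finset.mul_sum]
        apply Finset.sum_congr rfl
        intro i _
        simp only [hqfull, Polynomial.eval_add, Polynomial.eval_mul, Polynomial.eval_sub]
        rw [hSeval i t ht]
        ring
      have hlast0 : qfull (Fin.last (m+1)) = 0 := by
        have hS0 : Spoly (Fin.last (m+1)) = 0 := by
          rw [hSpoly]
          refine Finset.sum_eq_zero fun j _ => ?_
          rw [hclast]
          simp
        simp only [hqfull, hS0, mul_zero, add_zero, hpm]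
        ring
      rw [expand, Fin.sum_univ_castSucc, hlast0]
      simp only [Polynomial.eval_zero, zero_mul, add_zero]
      rfl
    have hqdeg : ∀ i : Fin (m+1), (q i).natDegree ≤ 2*d + (n-1) := by
      intro i
      have haux : ∀ r s : ℝ[X], r.natDegree ≤ d → s.natDegree ≤ d →
          (r.derivative * s * G).natDegree ≤ 2*d + (n-1) := by
        intro r s hr hs
        by_cases h0 : r.derivative = 0
        · simp [h0]
        · have h1 : 1 ≤ r.natDegree := by
            by_contra hcon
            push_neg at hcon
            have he : r.natDegree = 0 := by omega
            have := Polynomial.eq_C_of_natDegree_eq_zero he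
            exact h0 (by rw [this]; simp)
          have h2 : r.derivative.natDegree ≤ d - 1 :=
            (Polynomial.natDegree_derivative_le r).trans (by omega)
          calc (r.derivative * s * G).natDegree
              ≤ r.derivative.natDegree + s.natDegree + G.natDegree :=
                (Polynomial.natDegree_mul_le).trans
                  (add_le_add Polynomial.natDegree_mul_le le_rfl)
            _ ≤ (d-1) + d + n := by gcongr
            _ ≤ 2*d + (n-1) := by omega
      have hq1 : q i = ((P i.castSucc).derivative * pm * G - pm.derivative * P i.castSucc * G)
          + P i.castSucc * pm * Spoly i.castSucc := by
        rw [hq, hqfull]; ring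
      rw [hq1]
      refine (Polynomial.natDegree_add_le _ _).trans (max_le ?_ ?_)
      · refine (Polynomial.natDegree_sub_le _ _).trans (max_le ?_ ?_)
        · exact haux (P i.castSucc) pm (hPdeg _) (hPdeg _)
        · exact haux pm (P i.castSucc) (hPdeg _) (hPdeg _)
      · calc (P i.castSucc * pm * Spoly i.castSucc).natDegree
            ≤ (P i.castSucc).natDegree + pm.natDegree + (Spoly i.castSucc).natDegree :=
              (Polynomial.natDegree_mul_le).trans
                (add_le_add Polynomial.natDegree_mul_le le_rfl)
          _ ≤ d + d + (n-1) := by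
              gcongr
              exacts [hPdeg _, hPdeg _, hSdeg _]
          _ ≤ 2*d + (n-1) := by omega
    set Zs : Set ℝ := {t | t ∈ Dom n u v ∧ h₁ t = 0} with hZs
    set Rs : Set ℝ := {t | t ∈ Dom n u v ∧ pm.eval t = 0} with hRs
    set Ws : Set ℝ := {t | t ∈ Dom n u v ∧ H t = 0} with hWs
    have hRsub : Rs ⊆ ↑pm.roots.toFinset := by
      intro t ht
      simp only [Multiset.mem_toFinset, Finset.mem_coe, Polynomial.mem_roots']
      exact ⟨hpm0, ht.2⟩
    have hRfin : Rs.Finite := Set.Finite.subset pm.roots.toFinset.finite_toSet hRsub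
    have hRcard : Rs.ncard ≤ d := by
      have h1 := Set.ncard_le_ncard hRsub pm.roots.toFinset.finite_toSet
      rw [Set.ncard_coe_finset] at h1
      exact h1.trans ((Multiset.toFinset_card_le _).trans (pm.card_roots'.trans (hPdeg _)))
    have hZRW : Zs ∩ Rs ⊆ Ws := by
      rintro t ⟨⟨htD, htZ⟩, ⟨-, htR⟩⟩
      refine ⟨htD, ?_⟩
      rw [key t htD, htR, htZ]
      ring
    rcases ih q (fun i => c i.castSucc) (2*d + (n-1)) hqdeg with hHzero | ⟨hWfin, hWcard⟩
    · -- H vanishes identically on Dom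
      by_cases hz : ∃ t₀, t₀ ∈ Dom n u v ∧ h₁ t₀ = 0 ∧ pm.eval t₀ ≠ 0
      · obtain ⟨t₀, ht₀D, ht₀Z, ht₀R⟩ := hz
        have hnum : ∀ x ∈ Dom n u v,
            Dfun x * pm.eval x - h₁ x * pm.derivative.eval x = 0 := by
          intro x hx
          have h1 : H x = 0 := hHzero x hx
          have h2 := key x hx
          rw [h1] at h2
          exact (mul_eq_zero.mp h2.symm).resolve_left (hGpos x hx).ne'
        set U : Set ℝ := Dom n u v ∩ {x | pm.eval x ≠ 0} with hU
        have hUopen : IsOpen U := by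
          refine isOpen_Dom.inter ?_
          have : {x : ℝ | pm.eval x ≠ 0} = (fun x => pm.eval x) ⁻¹' ({0}ᶜ) := rfl
          rw [this]
          exact isOpen_compl_singleton.preimage (Polynomial.continuous pm)
        have ht₀U : t₀ ∈ U := ⟨ht₀D, ht₀R⟩
        obtain ⟨δ, hδ, hball⟩ := Metric.isOpen_iff.mp hUopen t₀ ht₀U
        have hφ : ∀ x ∈ Metric.ball t₀ δ, HasDerivAt (fun y => h₁ y / pm.eval y) 0 x := by
          intro x hx
          obtain ⟨hxD, hxR⟩ := hball hx
          have h3 := (hderiv x hxD).div (pm.hasDerivAt x) hxR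
          have h4 : (Dfun x * pm.eval x - h₁ x * pm.derivative.eval x) / pm.eval x ^ 2
              = 0 := by
            rw [hnum x hxD]; simp
          rwa [h4] at h3
        have mvt : ∀ α β : ℝ, α < β → α ∈ Metric.ball t₀ δ → β ∈ Metric.ball t₀ δ →
            h₁ β / pm.eval β = h₁ α / pm.eval α := by
          intro α β hab hα hβ
          have hsub : Icc α β ⊆ Metric.ball t₀ δ := by
            intro x hx
            rw [Metric.mem_ball, Real.dist_eq] at hα hβ ⊢
            rw [abs_lt] at hα hβ ⊢
            constructor <;> [linarith [hx.1]; linarith [hx.2]]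
          have hcont : ContinuousOn (fun y => h₁ y / pm.eval y) (Icc α β) :=
            fun x hx => ((hφ x (hsub hx)).continuousAt).continuousWithinAt
          obtain ⟨x, hx, hx0⟩ := exists_hasDerivAt_eq_slope (fun y => h₁ y / pm.eval y)
            (fun _ => 0) hab hcont (fun x hx => hφ x (hsub ⟨hx.1.le, hx.2.le⟩))
          have hba : β - α ≠ 0 := sub_ne_zero.mpr hab.ne'
          have h5 : h₁ β / pm.eval β - h₁ α / pm.eval α = 0 := by
            rcases div_eq_zero_iff.mp hx0.symm with h | h
            · exact h
            · exact absurd h hba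
          linarith
        have hball_zero : ∀ s ∈ Metric.ball t₀ δ, h₁ s = 0 := by
          intro s hs
          have ht₀ball : t₀ ∈ Metric.ball t₀ δ := Metric.mem_ball_self hδ
          have hφ0 : h₁ s / pm.eval s = 0 := by
            rcases lt_trichotomy s t₀ with h | h | h
            · rw [← mvt s t₀ h hs ht₀ball, ht₀Z, zero_div]
            · rw [h, ht₀Z, zero_div]
            · rw [mvt t₀ s h ht₀ball hs, ht₀Z, zero_div]
          exact (div_eq_zero_iff.mp hφ0).resolve_right (hball hs).2
        have hev : h₁ =ᶠ[nhds t₀] 0 := by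
          filter_upwards [Metric.ball_mem_nhds t₀ hδ] with s hs
          exact hball_zero s hs
        have hAn : AnalyticOnNhd ℝ h₁ (Dom n u v) := fun x hx =>
          Finset.analyticAt_fun_sum _
            (fun i _ => (analyticAt_polyeval (P i) x).mul (analyticAt_E (c i) hx))
        have hEqOn := hAn.eqOn_zero_of_preconnected_of_eventuallyEq_zero
          preconnected_Dom ht₀D hev
        left
        intro t ht
        rw [hfact t ht, show h₁ t = 0 from hEqOn ht, mul_zero]
      · push_neg at hz
        right
        rw [hZeq]
        have hsub : Zs ⊆ Rs := fun t ht => ⟨ht.1, hz t ht.1 ht.2⟩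
        exact ⟨hRfin.subset hsub, (Set.ncard_le_ncard hsub hRfin).trans
          (hRcard.trans (Bnd_d_le n (m+2) d (by omega)))⟩
    · -- gap counting
      right
      rw [hZeq]
      have hhyp : ∀ t₁ ∈ Zs, ∀ t₂ ∈ Zs, t₁ < t₂ →
          (∃ x ∈ Rs, t₁ < x ∧ x < t₂) ∨ (∃ x ∈ Ws, t₁ < x ∧ x < t₂)
          ∨ t₁ ∈ Rs ∨ t₂ ∈ Rs := by
        intro t₁ ht₁ t₂ ht₂ hlt
        by_cases hc1 : ∃ x ∈ Rs, t₁ < x ∧ x < t₂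
        · exact Or.inl hc1
        by_cases hc2 : t₁ ∈ Rs
        · exact Or.inr (Or.inr (Or.inl hc2))
        by_cases hc3 : t₂ ∈ Rs
        · exact Or.inr (Or.inr (Or.inr hc3))
        refine Or.inr (Or.inl ?_)
        have hIcc : Icc t₁ t₂ ⊆ Dom n u v := Icc_subset_Dom ht₁.1 ht₂.1
        have hne : ∀ x ∈ Icc t₁ t₂, pm.eval x ≠ 0 := by
          intro x hx h0
          have hxD := hIcc hx
          rcases eq_or_lt_of_le hx.1 with h1 | h1
          · exact hc2 (by rw [h1]; exact ⟨hxD, h0⟩)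
          rcases eq_or_lt_of_le hx.2 with h2 | h2
          · exact hc3 (by rw [← h2]; exact ⟨hxD, h0⟩)
          · exact hc1 ⟨x, ⟨hxD, h0⟩, h1, h2⟩
        have hφd : ∀ x ∈ Icc t₁ t₂, HasDerivAt (fun y => h₁ y / pm.eval y)
            ((Dfun x * pm.eval x - h₁ x * pm.derivative.eval x) / pm.eval x ^ 2) x :=
          fun x hx => (hderiv x (hIcc hx)).div (pm.hasDerivAt x) (hne x hx)
        have hcont : ContinuousOn (fun y => h₁ y / pm.eval y) (Icc t₁ t₂) :=
          fun x hx => ((hφd x hx).continuousAt).continuousWithinAt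
        have hends : h₁ t₁ / pm.eval t₁ = h₁ t₂ / pm.eval t₂ := by
          rw [ht₁.2, ht₂.2, zero_div, zero_div]
        obtain ⟨x, hxI, hx0⟩ := exists_hasDerivAt_eq_zero hlt hcont hends
          (fun x hx => hφd x ⟨hx.1.le, hx.2.le⟩)
        have hxmem : x ∈ Icc t₁ t₂ := ⟨hxI.1.le, hxI.2.le⟩
        have hxD := hIcc hxmem
        have hnum : Dfun x * pm.eval x - h₁ x * pm.derivative.eval x = 0 := by
          have hpm2 : pm.eval x ^ 2 ≠ 0 := pow_ne_zero _ (hne x hxmem)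
          exact (div_eq_zero_iff.mp hx0).resolve_right hpm2
        refine ⟨x, ⟨hxD, ?_⟩, hxI.1, hxI.2⟩
        rw [key x hxD, hnum, mul_zero]
      have hWfin' : Ws.Finite := hWfin
      have hcards : ∀ S : Finset ℝ, ↑S ⊆ Zs → S.card ≤ Rs.ncard + Ws.ncard + 1 :=
        fun S hS => gap_aux S.card S Zs Rs Ws le_rfl hRfin hWfin' hS hhyp hZRW
      obtain ⟨hZfin, hZcard⟩ := finite_of_card_le hcards
      refine ⟨hZfin, hZcard.trans ?_⟩
      have hb : Bnd n (m+2) d = 1 + d + Bnd n (m+1) (2*d + (n-1)) := rfl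
      have hWcard' : Ws.ncard ≤ Bnd n (m+1) (2*d + (n-1)) := hWcard
      have hb2 : Bnd n (m+1+1) d = Bnd n (m+2) d := rfl
      omega

end Stmt3
/-- The set of isolated roots, in `I = {t > 0 : ∀ j, uⱼ + vⱼ t > 0}`, of
`f(t) = ∑ᵢ cᵢ ∏ⱼ (uⱼ + vⱼ t)^{a_{ij}}`. -/
def isolRoots3 (n m : ℕ) (c : Fin m → ℝ) (u v : Fin n → ℝ)
    (a : Fin m → Fin n → ℝ) : Set ℝ :=
  {t : ℝ | (0 < t ∧ ∀ j, 0 < u j + v j * t) ∧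
    (∑ i, c i * ∏ j, (u j + v j * t) ^ a i j) = 0 ∧
    ∃ ε > 0, ∀ s : ℝ, (0 < s ∧ ∀ j, 0 < u j + v j * s) →
      (∑ i, c i * ∏ j, (u j + v j * s) ^ a i j) = 0 → |s - t| < ε → s = t}

/-- `f(t) = ∑_{i=1}^m cᵢ ∏_{j=1}^n (uⱼ + vⱼ t)^{a_{ij}}` has at most
`n + n² + ⋯ + n^{m-1}` isolated roots in `I = {t > 0 : ∀ j, uⱼ + vⱼ t > 0}`. -/
theorem stmt_3 (n m : ℕ) (hn : 1 ≤ n) (hm : 2 ≤ m) (c : Fin m → ℝ) (u v : Fin n → ℝ)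
    (a : Fin m → Fin n → ℝ) :
    (isolRoots3 n m c u v a).Finite ∧
    (isolRoots3 n m c u v a).ncard ≤ ∑ k ∈ Finset.Icc 1 (m - 1), n ^ k := by
  classical
  set p : Fin m → Polynomial ℝ := fun i => Polynomial.C (c i) with hp
  have hdeg : ∀ i, (p i).natDegree ≤ 0 := fun i => by simp [hp]
  have hmain := Stmt3.main_induction n hn u v m p a 0 hdeg
  have hIso_sub : isolRoots3 n m c u v a ⊆
      {t | t ∈ Stmt3.Dom n u v ∧ ∑ i, (p i).eval t * Stmt3.E u v (a i) t = 0} := by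
    intro t ht
    obtain ⟨htD, htf, _⟩ := ht
    refine ⟨htD, ?_⟩
    simpa [hp, Stmt3.E] using htf
  rcases hmain with hzero | ⟨hfin, hcard⟩
  · have hempty : isolRoots3 n m c u v a = ∅ := by
      ext t
      simp only [Set.mem_empty_iff_false, iff_false]
      intro ht
      obtain ⟨htD, htf, ε, hε, hiso⟩ := ht
      obtain ⟨δ, hδ, hball⟩ := Metric.isOpen_iff.mp Stmt3.isOpen_Dom t htD
      set s : ℝ := t + min δ ε / 2 with hs
      have hmin : 0 < min δ ε := lt_min hδ hε
      have habs : |s - t| = min δ ε / 2 := by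
        rw [hs]
        simp only [add_sub_cancel_left]
        rw [abs_of_pos (by linarith)]
      have hsball : s ∈ Metric.ball t δ := by
        rw [Metric.mem_ball, Real.dist_eq, habs]
        have := min_le_left δ ε
        linarith
      have hsD := hball hsball
      have hsf : (∑ i, c i * ∏ j, (u j + v j * s) ^ a i j) = 0 := by
        have h2 := hzero s hsD
        simpa [hp, Stmt3.E] using h2
      have hdist : |s - t| < ε := by
        rw [habs]
        have := min_le_right δ ε
        linarith
      have heq := hiso s hsD hsf hdist
      rw [hs] at heq
      have : min δ ε / 2 = 0 := by linarith [heq]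
      linarith
    rw [hempty]
    simp
  · refine ⟨hfin.subset hIso_sub, ?_⟩
    refine ((Set.ncard_le_ncard hIso_sub hfin).trans hcard).trans ?_
    obtain ⟨k, rfl⟩ : ∃ k, m = k + 2 := ⟨m - 2, by omega⟩
    have hb := Stmt3.Bnd_le_sum n hn k
    simpa using hb
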